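/- Mean-value decoupling of iterated commutator differences: for a tuple θ ∈ C(m), locally integrable matrices B₁,...,B_m, a linear operator T, and averages m_Q B⃗ of the matrices over a cube Q, one has (−1)^{|θ|} ∑_{σ ∈ C(θ)} (−1)^{|θ|−|σ|} B⃗_σ(x) (T⊗I_n)(B⃗_{(θ−σ)^t} f)(y) = ∑_{σ ∈ C(θ)} [∑_{α ∈ C(σ)} (−1)^{|θ|−|α|} B⃗_α(x)(m_Q B⃗)_{(σ−α)^t}] · (T⊗I_n)(∑_{β ∈ C(σ^c)} (−1)^{|θ|−|β|} (m_Q B⃗)_β B⃗_{(σ^c−β)^t} f)(y). -/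

import Mathlib

open Finset MeasureTheory

/-- Reverse-ordered product `B⃗_s = B_{s(j)} ⋯ B_{s(1)}` (indices in decreasing order). -/
noncomputable def prodRev {n : ℕ} (B : ℕ → Matrix (Fin n) (Fin n) ℂ) (s : Finset ℕ) :
    Matrix (Fin n) (Fin n) ℂ :=
  (((s.sort (· ≤ ·)).reverse).map B).prod

/-- Forward product `B⃗_{s^t} = B_{s(1)} ⋯ B_{s(j)}` (indices in increasing order). -/
noncomputable def prodFwd {n : ℕ} (B : ℕ → Matrix (Fin n) (Fin n) ℂ) (s : Finset ℕ) :
    Matrix (Fin n) (Fin n) ℂ :=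
  ((s.sort (· ≤ ·)).map B).prod

/-- `T ⊗ I_n`: the componentwise action of a scalar linear operator on vector functions. -/
def tensorI {X : Type*} {n : ℕ} (T : (X → ℂ) →ₗ[ℂ] (X → ℂ)) :
    (X → Fin n → ℂ) → (X → Fin n → ℂ) :=
  fun f x i => T (fun y => f y i) x

/-- The axis-parallel cube with corner `a` and side length `h`. -/
def cube {d : ℕ} (a : Fin d → ℝ) (h : ℝ) : Set (Fin d → ℝ) :=
  Set.univ.pi fun i => Set.Icc (a i) (a i + h)

section aux
variable {n : ℕ}

@[simp] lemma prodFwd_empty (M : ℕ → Matrix (Fin n) (Fin n) ℂ) : prodFwd M ∅ = 1 := by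
  simp [prodFwd]

@[simp] lemma prodRev_empty (M : ℕ → Matrix (Fin n) (Fin n) ℂ) : prodRev M ∅ = 1 := by
  simp [prodRev]

lemma sort_insert_max {s : Finset ℕ} {r : ℕ} (h : ∀ x ∈ s, x ≤ r) (hr : r ∉ s) :
    (insert r s).sort (· ≤ ·) = s.sort (· ≤ ·) ++ [r] := by
  have hperm : List.Perm ((insert r s).sort (· ≤ ·)) (s.sort (· ≤ ·) ++ [r]) := by
    refine ((Finset.sort_perm_toList _ _).trans ?_)
    refine (Finset.toList_insert hr).trans ?_
    refine (List.Perm.cons _ (Finset.sort_perm_toList s (· ≤ ·)).symm).trans ?_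
    exact (List.perm_append_singleton _ _).symm
  refine List.Perm.eq_of_pairwise' (Finset.pairwise_sort _ _) ?_ hperm
  · rw [List.pairwise_append]
    refine ⟨Finset.pairwise_sort _ _, List.pairwise_singleton _ _, ?_⟩
    intro a ha b hb
    rw [List.mem_singleton] at hb
    subst hb
    exact h a ((Finset.mem_sort _).1 ha)

lemma prodFwd_insert_max (M : ℕ → Matrix (Fin n) (Fin n) ℂ) {s : Finset ℕ} {r : ℕ}
    (h : ∀ x ∈ s, x ≤ r) (hr : r ∉ s) :
    prodFwd M (insert r s) = prodFwd M s * M r := by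
  simp [prodFwd, sort_insert_max h hr]

lemma prodRev_insert_max (M : ℕ → Matrix (Fin n) (Fin n) ℂ) {s : Finset ℕ} {r : ℕ}
    (h : ∀ x ∈ s, x ≤ r) (hr : r ∉ s) :
    prodRev M (insert r s) = M r * prodRev M s := by
  simp [prodRev, sort_insert_max h hr]

lemma vanish (M : ℕ → Matrix (Fin n) (Fin n) ℂ) (R : Finset ℕ) (hR : R.Nonempty) :
    ∑ U ∈ R.powerset, ((-1:ℂ) ^ (R \ U).card) • (prodFwd M U * prodRev M (R \ U)) = 0 := by
  set r := R.max' hR with hrdef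
  have hrR : r ∈ R := R.max'_mem hR
  have hmax : ∀ x ∈ R, x ≤ r := fun x hx => R.le_max' x hx
  have hre : r ∉ R.erase r := Finset.notMem_erase _ _
  have hRi : R = insert r (R.erase r) := (Finset.insert_erase hrR).symm
  rw [hRi, Finset.sum_powerset_insert hre, ← Finset.sum_add_distrib]
  apply Finset.sum_eq_zero
  intro U hU
  rw [Finset.mem_powerset] at hU
  have hrU : r ∉ U := fun hx => hre (hU hx)
  have h1 : insert r (R.erase r) \ U = insert r (R.erase r \ U) := by
    rw [Finset.insert_sdiff_of_notMem _ hrU]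
  have h2 : insert r (R.erase r) \ insert r U = R.erase r \ U := by
    rw [Finset.insert_sdiff_insert]
    ext a
    simp only [Finset.mem_sdiff, Finset.mem_erase, Finset.mem_insert]
    constructor
    · rintro ⟨⟨ha, hb⟩, hc⟩; exact ⟨⟨ha, hb⟩, fun hc' => hc (Or.inr hc')⟩
    · rintro ⟨⟨ha, hb⟩, hc⟩; exact ⟨⟨ha, hb⟩, fun hc' => hc'.elim ha hc⟩
  have hrRU : r ∉ R.erase r \ U := fun hx => hre (Finset.sdiff_subset hx)
  have hmax' : ∀ x ∈ R.erase r \ U, x ≤ r := fun x hx =>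
    hmax x (Finset.erase_subset _ _ (Finset.sdiff_subset hx))
  have hmaxU : ∀ x ∈ U, x ≤ r := fun x hx =>
    hmax x (Finset.erase_subset _ _ (hU hx))
  rw [h1, h2, Finset.card_insert_of_notMem hrRU,
    prodRev_insert_max M hmax' hrRU, prodFwd_insert_max M hmaxU hrU, pow_succ,
    ← mul_assoc (prodFwd M U), mul_comm ((-1:ℂ)^ _) (-1:ℂ), neg_one_mul, neg_smul,
    neg_add_cancel]

section core
variable {n : ℕ}

lemma neg_one_pow_sub' {a b : ℕ} (h : b ≤ a) : ((-1:ℂ)) ^ (a - b) = (-1) ^ a * (-1) ^ b := by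
  rw [pow_sub₀ (-1 : ℂ) (by norm_num) h, ← inv_pow, inv_neg, inv_one]

lemma sum_mulVec' {ι} (s : Finset ι) (A : ι → Matrix (Fin n) (Fin n) ℂ) (v : Fin n → ℂ) :
    (∑ a ∈ s, A a).mulVec v = ∑ a ∈ s, (A a).mulVec v := by
  ext i
  simp [Matrix.mulVec, dotProduct, Finset.sum_apply, Finset.sum_mul, Matrix.sum_apply]
  exact Finset.sum_comm

lemma mulVec_sum' {ι} (s : Finset ι) (A : Matrix (Fin n) (Fin n) ℂ) (v : ι → Fin n → ℂ) :
    A.mulVec (∑ a ∈ s, v a) = ∑ a ∈ s, A.mulVec (v a) := by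
  ext i
  simp [Matrix.mulVec, dotProduct, Finset.sum_apply, Finset.mul_sum]
  exact Finset.sum_comm

lemma pull {n : ℕ} (A : Matrix (Fin n) (Fin n) ℂ) (c : ℂ) (R : Finset ℕ) (w : Fin n → ℂ)
    (s : Finset ℕ → ℂ) (K : Finset ℕ → Matrix (Fin n) (Fin n) ℂ) :
    ∑ U ∈ R.powerset, (c * s U) • (A * K U).mulVec w
      = c • (A * ∑ U ∈ R.powerset, s U • K U).mulVec w := by
  rw [Finset.mul_sum]
  simp only [Matrix.mul_smul]
  rw [sum_mulVec', Finset.smul_sum]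
  simp only [Matrix.smul_mulVec, smul_smul]

lemma core_identity (N M : ℕ → Matrix (Fin n) (Fin n) ℂ) (t : Finset ℕ → Fin n → ℂ)
    (θ : Finset ℕ) :
    ∑ σ ∈ θ.powerset, ∑ α ∈ σ.powerset, ∑ β ∈ (θ \ σ).powerset,
        ((-1:ℂ) ^ α.card * (-1:ℂ) ^ β.card) •
          (prodRev N α * prodFwd M (σ \ α) * prodRev M β).mulVec (t ((θ \ σ) \ β))
    = ∑ σ ∈ θ.powerset, ((-1:ℂ) ^ σ.card) • (prodRev N σ).mulVec (t (θ \ σ)) := by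
  have step1 :
      ∑ σ ∈ θ.powerset, ∑ α ∈ σ.powerset, ∑ β ∈ (θ \ σ).powerset,
        ((-1:ℂ) ^ α.card * (-1:ℂ) ^ β.card) •
          (prodRev N α * prodFwd M (σ \ α) * prodRev M β).mulVec (t ((θ \ σ) \ β))
      = ∑ α ∈ θ.powerset, ∑ δ ∈ (θ \ α).powerset, ∑ U ∈ ((θ \ α) \ δ).powerset,
          ((-1:ℂ) ^ α.card * (-1:ℂ) ^ (((θ \ α) \ δ) \ U).card) •
            (prodRev N α * prodFwd M U * prodRev M (((θ \ α) \ δ) \ U)).mulVec (t δ) := by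
    have flat : ∀ (s : Finset (Finset ℕ)) (tt : Finset ℕ → Finset (Finset ℕ))
        (u : Finset ℕ → Finset ℕ → Finset (Finset ℕ))
        (g : Finset ℕ → Finset ℕ → Finset ℕ → Fin n → ℂ),
        ∑ σ ∈ s, ∑ α ∈ tt σ, ∑ β ∈ u σ α, g σ α β
          = ∑ p ∈ s.sigma (fun σ => (tt σ).sigma (u σ)), g p.1 p.2.1 p.2.2 := by
      intro s tt u g
      rw [Finset.sum_sigma]
      exact Finset.sum_congr rfl fun σ _ => by rw [Finset.sum_sigma]
    rw [flat, flat]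
    have key : ∀ σ α β : Finset ℕ, σ ⊆ θ → α ⊆ σ → β ⊆ θ \ σ →
        ((θ \ α) \ ((θ \ σ) \ β)) \ (σ \ α) = β := by
      intro σ α β hσ hα hβ
      ext a
      have h1 : a ∈ σ → a ∈ θ := fun h => hσ h
      have h2 : a ∈ α → a ∈ σ := fun h => hα h
      have h3 : a ∈ β → a ∈ θ \ σ := fun h => hβ h
      simp only [Finset.mem_sdiff] at *
      by_cases haσ : a ∈ σ <;> by_cases haβ : a ∈ β <;> tauto
    apply Finset.sum_nbij'
      (i := fun p => ⟨p.2.1, (θ \ p.1) \ p.2.2, p.1 \ p.2.1⟩)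
      (j := fun q => ⟨q.1 ∪ q.2.2, q.1, ((θ \ q.1) \ q.2.1) \ q.2.2⟩)
    · rintro ⟨σ, α, β⟩ hp
      simp only [Finset.mem_sigma, Finset.mem_powerset] at hp ⊢
      obtain ⟨hσ, hα, hβ⟩ := hp
      refine ⟨hα.trans hσ, ?_, ?_⟩ <;> intro x hx <;>
        · have h1 : x ∈ σ → x ∈ θ := fun h => hσ h
          have h2 : x ∈ α → x ∈ σ := fun h => hα h
          have h3 : x ∈ β → x ∈ θ \ σ := fun h => hβ h
          simp only [Finset.mem_sdiff] at *
          tauto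
    · rintro ⟨α, δ, U⟩ hq
      simp only [Finset.mem_sigma, Finset.mem_powerset] at hq ⊢
      obtain ⟨hα, hδ, hU⟩ := hq
      refine ⟨?_, Finset.subset_union_left, ?_⟩ <;> intro x hx <;>
        · have h1 : x ∈ α → x ∈ θ := fun h => hα h
          have h2 : x ∈ δ → x ∈ θ \ α := fun h => hδ h
          have h3 : x ∈ U → x ∈ (θ \ α) \ δ := fun h => hU h
          simp only [Finset.mem_sdiff, Finset.mem_union] at *
          tauto
    · rintro ⟨σ, α, β⟩ hp
      simp only [Finset.mem_sigma, Finset.mem_powerset] at hp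
      obtain ⟨hσ, hα, hβ⟩ := hp
      have h1 : α ∪ σ \ α = σ := Finset.union_sdiff_of_subset hα
      have h2 := key σ α β hσ hα hβ
      exact Sigma.ext h1 (heq_of_eq (by simp only [h1, h2]))
    · rintro ⟨α, δ, U⟩ hq
      simp only [Finset.mem_sigma, Finset.mem_powerset] at hq
      obtain ⟨hα, hδ, hU⟩ := hq
      have h1 : (α ∪ U) \ α = U := by
        ext a
        have h3 : a ∈ U → a ∈ (θ \ α) \ δ := fun h => hU h
        have h4 : a ∈ δ → a ∈ θ \ α := fun h => hδ h
        simp only [Finset.mem_sdiff, Finset.mem_union] at *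
        tauto
      have h2 : (θ \ (α ∪ U)) \ (((θ \ α) \ δ) \ U) = δ := by
        ext a
        have h3 : a ∈ U → a ∈ (θ \ α) \ δ := fun h => hU h
        have h4 : a ∈ δ → a ∈ θ \ α := fun h => hδ h
        have h5 : a ∈ α → a ∈ θ := fun h => hα h
        simp only [Finset.mem_sdiff, Finset.mem_union] at *
        by_cases h6 : a ∈ δ <;> tauto
      exact Sigma.ext rfl (heq_of_eq (by simp only [h1, h2]))
    · rintro ⟨σ, α, β⟩ hp
      simp only [Finset.mem_sigma, Finset.mem_powerset] at hp
      obtain ⟨hσ, hα, hβ⟩ := hp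
      have h2 := key σ α β hσ hα hβ
      show _ = ((-1:ℂ) ^ α.card * (-1:ℂ) ^ (((θ \ α) \ ((θ \ σ) \ β)) \ (σ \ α)).card) •
          (prodRev N α * prodFwd M (σ \ α) *
            prodRev M (((θ \ α) \ ((θ \ σ) \ β)) \ (σ \ α))).mulVec (t ((θ \ σ) \ β))
      simp only [h2]
  rw [step1]
  refine Finset.sum_congr rfl fun α hαθ => ?_
  rw [Finset.sum_eq_single_of_mem (θ \ α) (Finset.mem_powerset_self _) ?side]
  · rw [Finset.sdiff_self, Finset.powerset_empty, Finset.sum_singleton]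
    simp
  case side =>
    intro δ hδ hne
    rw [Finset.mem_powerset] at hδ
    have hR : ((θ \ α) \ δ).Nonempty := by
      rw [Finset.sdiff_nonempty]
      intro hsub
      exact hne (Finset.Subset.antisymm hδ hsub)
    have hp := pull (prodRev N α) ((-1:ℂ) ^ α.card) ((θ \ α) \ δ) (t δ)
      (fun U => (-1:ℂ) ^ ((((θ \ α) \ δ) \ U)).card)
      (fun U => prodFwd M U * prodRev M (((θ \ α) \ δ) \ U))
    rw [vanish M _ hR, mul_zero, Matrix.zero_mulVec, smul_zero] at hp
    simp only [← mul_assoc] at hp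
    exact hp

lemma tensorI_expand {X : Type*} {n : ℕ} (T : (X → ℂ) →ₗ[ℂ] (X → ℂ)) {ι : Type*}
    (s : Finset ι) (c : ι → ℂ) (K : ι → Matrix (Fin n) (Fin n) ℂ)
    (g : ι → X → Fin n → ℂ) (y : X) :
    tensorI T (fun z => ∑ b ∈ s, c b • (K b).mulVec (g b z)) y
      = ∑ b ∈ s, c b • (K b).mulVec (tensorI T (g b) y) := by
  funext i
  show T (fun z => (∑ b ∈ s, c b • (K b).mulVec (g b z)) i) y = _
  have h1 : (fun z => (∑ b ∈ s, c b • (K b).mulVec (g b z)) i)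
      = ∑ b ∈ s, ∑ j, (c b * K b i j) • (fun z => g b z j) := by
    funext z
    simp only [Finset.sum_apply, Pi.smul_apply, Matrix.mulVec, dotProduct,
      smul_eq_mul, Finset.mul_sum, mul_assoc]
  rw [h1, map_sum]
  simp only [map_sum, _root_.map_smul, Finset.sum_apply, Pi.smul_apply, smul_eq_mul]
  simp [tensorI, Matrix.mulVec, dotProduct, Finset.mul_sum, mul_assoc]

/-- mean-value decoupling of iterated commutator differences.
For a tuple `θ ∈ C(m)`, locally integrable matrix symbols `B₁, …, B_m`, a linear scalar
operator `T`, and the tuple `Mc` of entrywise averages of the symbols over a cube `Q`,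
`(−1)^{|θ|} ∑_{σ≤θ} (−1)^{|θ|−|σ|} B⃗_σ(x) (T⊗I_n)(B⃗_{(θ−σ)^t} f)(y)`
equals the decoupled double sum. -/
theorem decoupling_identity {d n m : ℕ}
    (T : ((Fin d → ℝ) → ℂ) →ₗ[ℂ] ((Fin d → ℝ) → ℂ))
    (B : ℕ → (Fin d → ℝ) → Matrix (Fin n) (Fin n) ℂ)
    (hB : ∀ i k l, LocallyIntegrable (fun x => B i x k l) volume)
    (θ : Finset ℕ) (hθ : θ ⊆ Finset.Icc 1 m)
    (a : Fin d → ℝ) (h : ℝ) (hh : 0 < h)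
    (Mc : ℕ → Matrix (Fin n) (Fin n) ℂ)
    (hMc : ∀ i k l, Mc i k l = ⨍ y in cube a h, B i y k l)
    (f : (Fin d → ℝ) → Fin n → ℂ) (x y : Fin d → ℝ) :
    ((-1 : ℂ) ^ θ.card) •
        ∑ σ ∈ θ.powerset, ((-1 : ℂ) ^ (θ.card - σ.card)) •
          (prodRev (fun i => B i x) σ).mulVec
            (tensorI T (fun z => (prodFwd (fun i => B i z) (θ \ σ)).mulVec (f z)) y) =
      ∑ σ ∈ θ.powerset,
        (∑ α ∈ σ.powerset, ((-1 : ℂ) ^ (θ.card - α.card)) •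
            (prodRev (fun i => B i x) α * prodFwd Mc (σ \ α))).mulVec
          (tensorI T
            (fun z => ∑ β ∈ (θ \ σ).powerset, ((-1 : ℂ) ^ (θ.card - β.card)) •
              ((prodRev Mc β * prodFwd (fun i => B i z) ((θ \ σ) \ β)).mulVec (f z))) y) := by
  have hpow : ((-1:ℂ)) ^ (θ.card + θ.card) = 1 := by
    rw [← two_mul, pow_mul]; norm_num
  have hsign : ∀ σ : Finset ℕ, σ ⊆ θ →
      ((-1:ℂ) ^ θ.card) * ((-1:ℂ) ^ (θ.card - σ.card)) = (-1:ℂ) ^ σ.card := by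
    intro σ hσ
    rw [neg_one_pow_sub' (Finset.card_le_card hσ), ← mul_assoc, ← pow_add, hpow, one_mul]
  have hsign2 : ∀ p q : ℕ, p ≤ θ.card → q ≤ θ.card →
      ((-1:ℂ) ^ (θ.card - p)) * ((-1:ℂ) ^ (θ.card - q)) = (-1:ℂ) ^ p * (-1:ℂ) ^ q := by
    intro p q hp hq
    rw [neg_one_pow_sub' hp, neg_one_pow_sub' hq, mul_mul_mul_comm, ← pow_add, hpow, one_mul]
  trans (∑ σ ∈ θ.powerset, ((-1:ℂ) ^ σ.card) • (prodRev (fun i => B i x) σ).mulVec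
      (tensorI T (fun z => (prodFwd (fun i => B i z) (θ \ σ)).mulVec (f z)) y))
  · rw [Finset.smul_sum]
    exact Finset.sum_congr rfl fun σ hσ => by
      rw [smul_smul, hsign σ (Finset.mem_powerset.1 hσ)]
  rw [← core_identity (fun i => B i x) Mc
    (fun s => tensorI T (fun z => (prodFwd (fun i => B i z) s).mulVec (f z)) y) θ]
  refine Finset.sum_congr rfl fun σ hσ => ?_
  rw [Finset.mem_powerset] at hσ
  have hT : tensorI T
      (fun z => ∑ β ∈ (θ \ σ).powerset, ((-1 : ℂ) ^ (θ.card - β.card)) •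
        ((prodRev Mc β * prodFwd (fun i => B i z) ((θ \ σ) \ β)).mulVec (f z))) y
      = ∑ β ∈ (θ \ σ).powerset, ((-1 : ℂ) ^ (θ.card - β.card)) •
          (prodRev Mc β).mulVec
            (tensorI T (fun z => (prodFwd (fun i => B i z) ((θ \ σ) \ β)).mulVec (f z)) y) := by
    have := tensorI_expand T ((θ \ σ).powerset) (fun β => ((-1:ℂ) ^ (θ.card - β.card)))
      (fun β => prodRev Mc β)
      (fun β z => (prodFwd (fun i => B i z) ((θ \ σ) \ β)).mulVec (f z)) y
    simpa [Matrix.mulVec_mulVec] using this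
  rw [hT, sum_mulVec']
  simp only [Matrix.smul_mulVec, mulVec_sum', Matrix.mulVec_smul, Finset.smul_sum,
    smul_smul, Matrix.mulVec_mulVec]
  refine Finset.sum_congr rfl fun α hα => Finset.sum_congr rfl fun β hβ => ?_
  rw [Finset.mem_powerset] at hα hβ
  rw [hsign2 α.card β.card (Finset.card_le_card (hα.trans hσ))
    (Finset.card_le_card (hβ.trans Finset.sdiff_subset))]
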